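/- Let a countable group G act on a space M, let μ be a nondegenerate probability measure on G, and let ν be a μ-stationary probability measure on M. Then for every g ∈ G there is a constant C''_g > 0 such that for every measurable set E ⊆ M with E ∪ gE = M, one has ν(E) ≥ C''_g. -/

import Mathlib

open MeasureTheory

/-- A measure on a group is nondegenerate if its support generates the group as a
semigroup. -/
def Nondeg {G : Type*} [Group G] [MeasurableSpace G] (μ : Measure G) : Prop :=
  ∀ g : G, ∃ l : List G, l ≠ [] ∧ (∀ x ∈ l, 0 < μ {x}) ∧ l.prod = g

/-- `ν` is `μ`-stationary: `μ * ν = ∑_g μ{g} · gν = ν`. -/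
def Stationary {G M : Type*} [Group G] [MeasurableSpace G] [MulAction G M]
    [MeasurableSpace M] (μ : Measure G) (ν : Measure M) : Prop :=
  Measure.sum (fun g : G => μ {g} • Measure.map (fun x : M => g • x) ν) = ν

lemma stationary_single_le {G M : Type*} [Group G] [Countable G] [MeasurableSpace G]
    [MeasurableSpace M] [MulAction G M]
    (hmeas : ∀ g : G, Measurable (fun x : M => g • x))
    (μ : Measure G) (ν : Measure M) (hν : Stationary μ ν) (h : G) (A : Set M)
    (hA : MeasurableSet A) :
    μ {h} * ν ((fun x : M => h • x) ⁻¹' A) ≤ ν A := by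
  have hle : (μ {h} • Measure.map (fun x : M => h • x) ν) ≤ ν := by
    conv_rhs => rw [← hν]
    exact Measure.le_sum _ h
  have := hle A
  rwa [Measure.smul_apply, smul_eq_mul, Measure.map_apply (hmeas h) hA] at this

lemma stationary_list_le {G M : Type*} [Group G] [Countable G] [MeasurableSpace G]
    [MeasurableSpace M] [MulAction G M]
    (hmeas : ∀ g : G, Measurable (fun x : M => g • x))
    (μ : Measure G) (ν : Measure M) (hν : Stationary μ ν) :
    ∀ l : List G, ∀ A : Set M, MeasurableSet A →
      (l.map (fun x => μ {x})).prod * ν ((fun x : M => l.prod • x) ⁻¹' A) ≤ ν A := by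
  intro l
  induction l with
  | nil =>
      intro A hA
      simp
  | cons h t ih =>
      intro A hA
      have hpre : (fun x : M => (h * t.prod) • x) ⁻¹' A
          = (fun x : M => t.prod • x) ⁻¹' ((fun x : M => h • x) ⁻¹' A) := by
        ext x; simp [mul_smul]
      calc ((h :: t).map (fun x => μ {x})).prod * ν ((fun x : M => (h :: t).prod • x) ⁻¹' A)
          = μ {h} * ((t.map (fun x => μ {x})).prod *
              ν ((fun x : M => t.prod • x) ⁻¹' ((fun x : M => h • x) ⁻¹' A))) := by
            simp [List.prod_cons, hpre, mul_assoc]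
        _ ≤ μ {h} * ν ((fun x : M => h • x) ⁻¹' A) := by
            gcongr
            exact ih _ ((hmeas h) hA)
        _ ≤ ν A := stationary_single_le hmeas μ ν hν h A hA

/-- If a countable group `G` acts (measurably) on `M`, `μ` is a nondegenerate probability
measure on `G` and `ν` is a `μ`-stationary probability measure on `M`, then for every
`g ∈ G` there is a constant `C''_g > 0` such that every measurable `E ⊆ M` with
`E ∪ gE = M` satisfies `ν(E) ≥ C''_g`. -/
theorem stationary_covering_bound {G M : Type*} [Group G] [Countable G] [MeasurableSpace G]
    [MeasurableSingletonClass G] [MeasurableSpace M] [MulAction G M]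
    (hmeas : ∀ g : G, Measurable (fun x : M => g • x))
    (μ : Measure G) [IsProbabilityMeasure μ] (hμ : Nondeg μ)
    (ν : Measure M) [IsProbabilityMeasure ν] (hν : Stationary μ ν) (g : G) :
    ∃ C : NNReal, 0 < C ∧ ∀ E : Set M, MeasurableSet E →
      E ∪ (fun x : M => g • x) '' E = Set.univ → (C : ENNReal) ≤ ν E := by
  obtain ⟨l, hlne, hlpos, hlprod⟩ := hμ g⁻¹
  set c : ENNReal := (l.map (fun x => μ {x})).prod with hc
  have hc_pos : 0 < c := by
    rw [hc]
    apply CanonicallyOrderedAdd.list_prod_pos.mpr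
    intro x hx
    obtain ⟨y, hy, rfl⟩ := List.mem_map.mp hx
    exact hlpos y hy
  have hc_le_one : c ≤ 1 := by
    rw [hc]
    have : ∀ t : List G, ((t.map (fun x => μ {x})).prod : ENNReal) ≤ 1 := by
      intro t
      induction t with
      | nil => simp
      | cons a t ih => simpa [List.prod_cons] using mul_le_one' prob_le_one ih
    exact this l
  have hc_ne_top : c ≠ ⊤ := fun h => by simp [h] at hc_le_one
  refine ⟨c.toNNReal / 2, ?_, ?_⟩
  · exact div_pos (ENNReal.toNNReal_pos hc_pos.ne' hc_ne_top) two_pos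
  intro E hE hcover
  have hcoe : ((c.toNNReal / 2 : NNReal) : ENNReal) = c / 2 := by
    rw [ENNReal.coe_div (two_ne_zero), ENNReal.coe_toNNReal hc_ne_top]
    norm_num
  rw [hcoe]
  -- the image of E under g is the preimage under g⁻¹
  have himg : (fun x : M => g • x) '' E = (fun x : M => g⁻¹ • x) ⁻¹' E := by
    ext x
    constructor
    · rintro ⟨y, hy, rfl⟩; simpa using hy
    · intro hx; exact ⟨g⁻¹ • x, hx, by simp⟩
  have hkey : c * ν ((fun x : M => g • x) '' E) ≤ ν E := by
    rw [himg]
    have := stationary_list_le hmeas μ ν hν l E hE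
    rwa [hlprod] at this
  by_contra hlt
  push_neg at hlt
  -- then ν(gE) < 1/2
  have hgE_lt : ν ((fun x : M => g • x) '' E) < 1 / 2 := by
    by_contra hge
    push_neg at hge
    have hle2 : c * (1 / 2) ≤ c * ν ((fun x : M => g • x) '' E) := by gcongr
    rw [← mul_one_div] at hlt
    exact absurd (hle2.trans hkey) (not_le.mpr hlt)
  -- but ν E + ν gE ≥ 1
  have hsum : (1 : ENNReal) ≤ ν E + ν ((fun x : M => g • x) '' E) := by
    calc (1 : ENNReal) = ν Set.univ := (measure_univ).symm
      _ = ν (E ∪ (fun x : M => g • x) '' E) := by rw [hcover]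
      _ ≤ ν E + ν ((fun x : M => g • x) '' E) := measure_union_le _ _
  have h1 : (1 : ENNReal) < ν E + 1 / 2 :=
    hsum.trans_lt (ENNReal.add_lt_add_left (measure_ne_top ν E) hgE_lt)
  have h2 : (1 / 2 : ENNReal) < ν E := by
    by_contra hle
    push_neg at hle
    have hle' : ν E + 1 / 2 ≤ 1 := by
      calc ν E + 1 / 2 ≤ 1 / 2 + 1 / 2 := by gcongr
        _ = 1 := ENNReal.add_halves 1
    exact absurd h1 (not_lt.mpr hle')
  have : c / 2 ≤ 1 / 2 := by gcongr
  exact absurd (this.trans h2.le) (not_le.mpr hlt)
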